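/- Let A be a full subcategory of C_fin and let F be an object of C which is universal and locally finite for A. For any object A of A and t ≥ 2: if t_A(A) ≤ t, then F → (B)^A_{k,t} for every k ≥ 2 and every B in A with hom(A,B) ≠ ∅. That is, the finite Ramsey degree bound transfers to colorings into the universal object F. -/

import Mathlib

open CategoryTheory

universe v u v' u'

def RamseyArrow (C : Type u) [Category.{v} C] (A B Z : C) (k t : ℕ) : Prop :=
  ∀ χ : (A ⟶ Z) → Fin k, ∃ w : B ⟶ Z,
    (Set.range fun f : A ⟶ B => χ (f ≫ w)).ncard ≤ t

noncomputable def ramseyDeg (C : Type u) [Category.{v} C] (A : C) : ℕ∞ :=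
  sInf {n : ℕ∞ | ∃ m : ℕ, n = (m : ℕ∞) ∧ 1 ≤ m ∧
    ∀ k : ℕ, 2 ≤ k → ∀ B : C, ∃ Z : C, RamseyArrow C A B Z k m}

def SatisfiesC (C : Type u) [Category.{v} C] (Cfin : Set C) : Prop :=
  (∀ {X Y : C} (f : X ⟶ Y), Mono f) ∧
  (∀ A B : C, A ∈ Cfin → B ∈ Cfin → Finite (A ⟶ B)) ∧
  (∀ F : C, ∃ A : C, A ∈ Cfin ∧ Nonempty (A ⟶ F)) ∧
  (∀ B : C, B ∈ Cfin → {A : C | A ∈ Cfin ∧ Nonempty (A ⟶ B)}.Finite)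

def UniversalFor (C : Type u) [Category.{v} C] (F : C) (S : Set C) : Prop :=
  ∀ A ∈ S, Nonempty (A ⟶ F)

def LocallyFiniteFor (C : Type u) [Category.{v} C] (F : C) (S : Set C) : Prop :=
  ∀ (A B : C), A ∈ S → B ∈ S → ∀ (e : A ⟶ F) (f : B ⟶ F),
    ∃ D₀ : C, D₀ ∈ S ∧ ∃ (r : D₀ ⟶ F) (p : A ⟶ D₀) (q : B ⟶ D₀),
      p ≫ r = e ∧ q ≫ r = f ∧
      ∀ (H : C) (r' : H ⟶ F) (p' : A ⟶ H) (q' : B ⟶ H),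
        p' ≫ r' = e → q' ≫ r' = f →
        ∃ s : D₀ ⟶ H, s ≫ r' = r ∧ p ≫ s = p' ∧ q ≫ s = q'

theorem stmt3 {C : Type u} [Category.{v} C] (Cfin Afin : Set C)
    (hsat : SatisfiesC C Cfin) (hsub : Afin ⊆ Cfin)
    (F : C) (huniv : UniversalFor C F Afin) (hlf : LocallyFiniteFor C F Afin)
    (A : C) (hA : A ∈ Afin) (t : ℕ) (ht : 2 ≤ t)
    (hdeg : ramseyDeg (ObjectProperty.FullSubcategory fun X : C => X ∈ Afin) ⟨A, hA⟩ ≤ (t : ℕ∞)) :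
    ∀ k : ℕ, 2 ≤ k → ∀ B : C, B ∈ Afin → Nonempty (A ⟶ B) →
      RamseyArrow C A B F k t := by
  intro k hk B hB hAB χ
  -- extract a finite Ramsey degree bound m ≤ t from hdeg
  set S : Set ℕ∞ := {n : ℕ∞ | ∃ m : ℕ, n = (m : ℕ∞) ∧ 1 ≤ m ∧
    ∀ k : ℕ, 2 ≤ k → ∀ B : ObjectProperty.FullSubcategory fun X : C => X ∈ Afin,
      ∃ Z, RamseyArrow (ObjectProperty.FullSubcategory fun X : C => X ∈ Afin) ⟨A, hA⟩ B Z k m} with hS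
  have hex : ∃ n ∈ S, n ≤ (t : ℕ∞) := by
    by_contra h
    push_neg at h
    have h1 : (t : ℕ∞) + 1 ≤ sInf S := le_sInf fun n hn => Order.add_one_le_of_lt (h n hn)
    have h2 : (t : ℕ∞) + 1 ≤ (t : ℕ∞) := h1.trans hdeg
    rw [show ((t : ℕ∞) + 1) = ((t + 1 : ℕ) : ℕ∞) by push_cast; ring] at h2
    exact absurd (Nat.cast_le.mp h2) (by omega)
  obtain ⟨n, hn, hnt⟩ := hex
  obtain ⟨m, rfl, hm1, hram⟩ := hn
  have hmt : m ≤ t := by exact_mod_cast hnt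
  obtain ⟨Z, hZ⟩ := hram k hk ⟨B, hB⟩
  obtain ⟨u⟩ := huniv Z.obj Z.property
  -- induced coloring on hom(A, Z)
  obtain ⟨w₀, hw₀⟩ := hZ (fun g => χ (g.hom ≫ u))
  refine ⟨w₀.hom ≫ u, le_trans (le_of_eq ?_) (hw₀.trans hmt)⟩
  exact congrArg Set.ncard (Set.ext fun c => ⟨fun ⟨f, hf⟩ => ⟨⟨f⟩, by rw [← hf]; simp⟩,
    fun ⟨f, hf⟩ => ⟨f.hom, by rw [← hf]; simp⟩⟩)
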